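/- For all real numbers M > 0, D > 0 and λ ≥ 0, the integral (1/(2π)) ∫_{-∞}^{∞} ω² / ((λ − Mω²)² + D²ω²) dω equals 1/(2DM). (This is the squared H₂ norm of each frequency-output mode, independent of the mode eigenvalue λ.) -/

import Mathlib

open MeasureTheory Real Set

lemma lorentz_int (M D : ℝ) (hM : 0 < M) (hD : 0 < D) :
    ∫ u : ℝ, (M^2*u^2 + D^2)⁻¹ = π/(M*D) := by
  have h : ∀ u : ℝ, (M^2*u^2 + D^2)⁻¹ = D⁻¹^2 * ((fun x : ℝ => (1 + x^2)⁻¹) ((M/D) * u)) := by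
    intro u; field_simp; ring
  simp_rw [h]
  rw [MeasureTheory.integral_const_mul, MeasureTheory.Measure.integral_comp_mul_left
    (fun x : ℝ => (1 + x^2)⁻¹) (M/D), integral_univ_inv_one_add_sq]
  rw [abs_of_pos (by positivity)]
  field_simp
  rw [smul_eq_mul, ← mul_assoc, mul_div_assoc', mul_div_right_comm, div_self hM.ne', one_mul]

lemma lorentz_integrable (M D : ℝ) (hM : 0 < M) (hD : 0 < D) :
    Integrable (fun u : ℝ => (M^2*u^2 + D^2)⁻¹) := by
  have h : ∀ u : ℝ, (M^2*u^2 + D^2)⁻¹ = D⁻¹^2 * ((fun x : ℝ => (1 + x^2)⁻¹) ((M/D) * u)) := by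
    intro u; field_simp; ring
  simp_rw [h]
  exact ((integrable_inv_one_add_sq.comp_mul_left' (by positivity : (M/D) ≠ 0)).const_mul _)

lemma glasser_branch (c ε : ℝ) (hc : 0 < c) (hε : ε = 1 ∨ ε = -1) (f : ℝ → ℝ) :
    ((∫ x in {x : ℝ | 0 < ε * x}, f x) =
      ∫ u : ℝ, ((1 + ε * (u / Real.sqrt (u^2 + 4*c))) / 2) *
          f ((u + ε * Real.sqrt (u^2 + 4*c)) / 2))
    ∧ (IntegrableOn f {x : ℝ | 0 < ε * x} ↔
        Integrable (fun u : ℝ => ((1 + ε * (u / Real.sqrt (u^2 + 4*c))) / 2) *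
          f ((u + ε * Real.sqrt (u^2 + 4*c)) / 2))) := by
  have hε2 : ε^2 = 1 := by rcases hε with rfl | rfl <;> norm_num
  have hεabs : |ε| = 1 := by rcases hε with rfl | rfl <;> norm_num
  set r : ℝ → ℝ := fun u => Real.sqrt (u^2 + 4*c) with hr
  have hpos : ∀ u : ℝ, 0 < u^2 + 4*c := fun u => by positivity
  have hrpos : ∀ u : ℝ, 0 < r u := fun u => Real.sqrt_pos.mpr (hpos u)
  have hrsq : ∀ u : ℝ, (r u)^2 = u^2 + 4*c := fun u => Real.sq_sqrt (hpos u).le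
  have habs : ∀ u : ℝ, |u| < r u := by
    intro u
    have : Real.sqrt (u^2) < Real.sqrt (u^2 + 4*c) :=
      Real.sqrt_lt_sqrt (sq_nonneg u) (by linarith)
    simpa [Real.sqrt_sq_eq_abs] using this
  have hεu : ∀ u : ℝ, |ε * u| = |u| := fun u => by rw [abs_mul, hεabs, one_mul]
  set φ : ℝ → ℝ := fun u => (u + ε * r u) / 2 with hφ
  set p : ℝ → ℝ := fun u => (1 + ε * (u / r u)) / 2 with hp
  have hd : ∀ u : ℝ, HasDerivAt φ (p u) u := by
    intro u
    have h1 : HasDerivAt (fun u : ℝ => u^2 + 4*c) (2*u) u := by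
      simpa using (hasDerivAt_pow 2 u).add_const (4*c)
    have h2 : HasDerivAt r (2*u / (2 * r u)) u := h1.sqrt (hpos u).ne'
    have h3 : HasDerivAt φ ((1 + ε * (2*u / (2 * r u))) / 2) u :=
      ((hasDerivAt_id u).add ((h2.const_mul ε))).div_const 2
    rw [show 2*u / (2 * r u) = u / r u from mul_div_mul_left _ _ (two_ne_zero)] at h3
    exact h3
  have hppos : ∀ u : ℝ, 0 < p u := by
    intro u
    have h1 : -(r u) < ε * u := by
      have := neg_abs_le (ε * u); have := hεu u; have := habs u; linarith
    have : -1 < ε * u / r u := by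
      rw [lt_div_iff₀ (hrpos u)]; linarith
    have : -1 < ε * (u / r u) := by rw [mul_div_assoc] at this; exact this
    simp only [hp]; linarith
  have hple : ∀ u : ℝ, p u ≤ 1 := by
    intro u
    have h1 : ε * u < r u := by
      have := le_abs_self (ε * u); have := hεu u; have := habs u; linarith
    have : ε * u / r u < 1 := by rw [div_lt_one (hrpos u)]; exact h1
    rw [mul_div_assoc] at this
    simp only [hp]; linarith
  have hmono : StrictMono φ := by
    apply strictMono_of_deriv_pos
    intro u; rw [(hd u).deriv]; exact hppos u
  have himg : φ '' univ = {x : ℝ | 0 < ε * x} := by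
    ext x
    simp only [image_univ, mem_range, mem_setOf_eq]
    constructor
    · rintro ⟨u, rfl⟩
      have h1 : -(r u) < ε * u := by
        have := neg_abs_le (ε * u); have := hεu u; have := habs u; linarith
      have h2 : ε * ((u + ε * r u) / 2) = (ε * u + ε^2 * r u) / 2 := by ring
      rw [hε2, one_mul] at h2
      simp only [hφ]
      rw [h2]; linarith
    · intro hx
      have hx0 : x ≠ 0 := by
        intro h; rw [h, mul_zero] at hx; exact lt_irrefl 0 hx
      refine ⟨x - c/x, ?_⟩
      have hsum : 0 < ε * (x + c/x) := by
        have h2 : 0 < ε * (c/x) := by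
          have : ε * (c/x) = c * (ε * x) / x^2 := by field_simp
          rw [this]; positivity
        rw [mul_add]; linarith
      have hsq : (x - c/x)^2 + 4*c = (x + c/x)^2 := by field_simp; ring
      have hrval : r (x - c/x) = ε * (x + c/x) := by
        simp only [hr]
        rw [hsq, Real.sqrt_sq_eq_abs]
        rcases hε with rfl | rfl
        · rw [one_mul] at hsum ⊢; exact abs_of_pos hsum
        · rw [abs_of_neg (by linarith)]; ring
      simp only [hφ, hrval]
      rw [show ε * (ε * (x + c/x)) = (x + c/x) by rw [← mul_assoc, ← sq, hε2, one_mul]]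
      field_simp
      ring
  have hderiv : ∀ u ∈ (univ : Set ℝ), HasDerivAt φ (p u) u := fun u _ => hd u
  have hinj : InjOn φ univ := hmono.injective.injOn
  have habsp : ∀ u : ℝ, |p u| = p u := fun u => abs_of_pos (hppos u)
  constructor
  · have := integral_image_eq_integral_abs_deriv_smul MeasurableSet.univ
      (fun u hu => (hderiv u hu).hasDerivWithinAt) hinj f
    rw [himg, Measure.restrict_univ] at this
    rw [this]
    congr 1; funext u
    rw [habsp u, smul_eq_mul]
  · have := integrableOn_image_iff_integrableOn_abs_deriv_smul MeasurableSet.univ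
      (fun u hu => (hderiv u hu).hasDerivWithinAt) hinj f
    rw [himg] at this
    rw [this]
    unfold IntegrableOn
    rw [Measure.restrict_univ]
    constructor
    · intro h; convert h using 1; funext u; rw [habsp u, smul_eq_mul]
    · intro h; convert h using 1; funext u; rw [habsp u, smul_eq_mul]
/-- The squared H₂ norm of each frequency-output mode
`G̃(s) = s/(Ms² + Ds + λ)`:
`(1/(2π)) ∫_{-∞}^{∞} ω² / ((λ − Mω²)² + D²ω²) dω = 1/(2DM)`,
independent of the mode eigenvalue `λ ≥ 0`. -/
theorem frequency_mode_H2_norm_sq (M D lam : ℝ) (hM : 0 < M) (hD : 0 < D)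
    (hlam : 0 ≤ lam) :
    (1 / (2 * Real.pi)) *
        (∫ ω : ℝ, ω ^ 2 / ((lam - M * ω ^ 2) ^ 2 + D ^ 2 * ω ^ 2)) =
      1 / (2 * D * M) := by
  have hπ : Real.pi ≠ 0 := Real.pi_ne_zero
  have key : (∫ ω : ℝ, ω ^ 2 / ((lam - M * ω ^ 2) ^ 2 + D ^ 2 * ω ^ 2)) = π / (M * D) := by
    rcases eq_or_lt_of_le hlam with hlam0 | hlam0
    · -- the case lam = 0
      subst hlam0
      have h0 : ∀ᵐ (x : ℝ), x ≠ 0 := by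
        refine MeasureTheory.ae_iff.mpr ?_
        simp only [ne_eq, not_not, Set.setOf_eq_eq_singleton]
        exact Real.volume_singleton
      have hae : (fun ω : ℝ => ω ^ 2 / ((0 - M * ω ^ 2) ^ 2 + D ^ 2 * ω ^ 2))
          =ᵐ[volume] fun u : ℝ => (M^2*u^2 + D^2)⁻¹ := by
        filter_upwards [h0] with x hx
        rw [show (0 - M*x^2)^2 + D^2*x^2 = x^2 * (M^2*x^2+D^2) by ring,
          div_eq_iff (by positivity)]
        field_simp
      rw [integral_congr_ae hae]
      exact lorentz_int M D hM hD
    · -- the case 0 < lam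
      clear hlam
      rename' hlam0 => hlam
      set f : ℝ → ℝ := fun ω => ω ^ 2 / ((lam - M * ω ^ 2) ^ 2 + D ^ 2 * ω ^ 2) with hf
      set g : ℝ → ℝ := fun u => (M^2*u^2 + D^2)⁻¹ with hg
      set c : ℝ := lam / M with hc
      have hc0 : 0 < c := by positivity
      have hMc : M * c = lam := by rw [hc]; field_simp
      have hgpos : ∀ u : ℝ, 0 < M^2*u^2 + D^2 := fun u => by positivity
      have hpos : ∀ u : ℝ, (0:ℝ) < u^2 + 4*c := fun u => by positivity
      set r : ℝ → ℝ := fun u => Real.sqrt (u^2 + 4*c) with hr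
      have hrpos : ∀ u : ℝ, 0 < r u := fun u => Real.sqrt_pos.mpr (hpos u)
      have hrsq : ∀ u : ℝ, (r u)^2 = u^2 + 4*c := fun u => Real.sq_sqrt (hpos u).le
      -- composition identity
      have hcomp : ∀ (ε : ℝ), ε^2 = 1 → ∀ u : ℝ, f ((u + ε * r u) / 2) = g u := by
        intro ε hε2 u
        set x : ℝ := (u + ε * r u) / 2 with hx
        have h2x : 2*x - u = ε * r u := by rw [hx]; ring
        have hsq : (2*x - u)^2 = u^2 + 4*c := by
          rw [h2x, mul_pow, hε2, one_mul, hrsq]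
        have hx2 : x^2 = u*x + c := by linear_combination hsq / 4
        have hx0 : x ≠ 0 := by
          intro h
          rw [h] at hx2
          simp at hx2
          nlinarith [hx2]
        have hfx : lam - M*x^2 = -(M*u*x) := by rw [hx2]; linear_combination -hMc
        have hA : M^2*u^2 + D^2 ≠ 0 := (hgpos u).ne'
        simp only [hf, hg]
        rw [show (lam - M * x ^ 2) = -(M*u*x) from hfx]
        rw [show (-(M*u*x))^2 + D^2*x^2 = x^2 * (M^2*u^2+D^2) by ring]
        rw [div_eq_iff (by positivity)]
        field_simp
      -- the two branches
      obtain ⟨heq1, hint1⟩ := glasser_branch c 1 hc0 (Or.inl rfl) f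
      obtain ⟨heq2, hint2⟩ := glasser_branch c (-1) hc0 (Or.inr rfl) f
      set F1 : ℝ → ℝ := fun u => ((1 + 1 * (u / r u)) / 2) * g u with hF1
      set F2 : ℝ → ℝ := fun u => ((1 + (-1) * (u / r u)) / 2) * g u with hF2
      have habsr : ∀ u : ℝ, |u| < r u := by
        intro u
        have : Real.sqrt (u^2) < Real.sqrt (u^2 + 4*c) :=
          Real.sqrt_lt_sqrt (sq_nonneg u) (by linarith)
        simpa [Real.sqrt_sq_eq_abs] using this
      have ht : ∀ u : ℝ, |u / r u| ≤ 1 := by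
        intro u
        rw [abs_div, abs_of_pos (hrpos u), div_le_one (hrpos u)]
        exact (habsr u).le
      have hcontr : Continuous r :=
        Real.continuous_sqrt.comp ((continuous_pow 2).add continuous_const)
      have hcontt : Continuous fun u : ℝ => u / r u :=
        continuous_id.div hcontr fun u => (hrpos u).ne'
      have hcontg : Continuous g :=
        Continuous.inv₀ ((continuous_const.mul (continuous_pow 2)).add continuous_const)
          fun u => (hgpos u).ne'
      have hF1cont : Continuous F1 := by
        apply Continuous.mul _ hcontg
        exact (continuous_const.add (continuous_const.mul hcontt)).div_const 2
      have hF2cont : Continuous F2 := by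
        apply Continuous.mul _ hcontg
        exact (continuous_const.add (continuous_const.mul hcontt)).div_const 2
      have hgnn : ∀ u : ℝ, 0 ≤ g u := fun u => by rw [hg]; positivity
      have hF1int : Integrable F1 := by
        apply (lorentz_integrable M D hM hD).mono hF1cont.aestronglyMeasurable
        apply Filter.Eventually.of_forall
        intro u
        have h1 := abs_le.mp (ht u)
        rw [Real.norm_eq_abs, Real.norm_eq_abs, hF1, abs_mul, abs_of_nonneg (hgnn u)]
        have h2 : |(1 + 1 * (u / r u))/2| ≤ 1 := by rw [abs_le]; constructor <;> linarith
        calc |(1 + 1 * (u / r u))/2| * g u ≤ 1 * g u := mul_le_mul_of_nonneg_right h2 (hgnn u)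
          _ = g u := one_mul _
      have hF2int : Integrable F2 := by
        apply (lorentz_integrable M D hM hD).mono hF2cont.aestronglyMeasurable
        apply Filter.Eventually.of_forall
        intro u
        have h1 := abs_le.mp (ht u)
        rw [Real.norm_eq_abs, Real.norm_eq_abs, hF2, abs_mul, abs_of_nonneg (hgnn u)]
        have h2 : |(1 + (-1) * (u / r u))/2| ≤ 1 := by rw [abs_le]; constructor <;> linarith
        calc |(1 + (-1) * (u / r u))/2| * g u ≤ 1 * g u := mul_le_mul_of_nonneg_right h2 (hgnn u)
          _ = g u := one_mul _
      have hone : {x : ℝ | 0 < (1:ℝ) * x} = Ioi (0:ℝ) := by ext x; simp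
      have hneg : {x : ℝ | 0 < (-1:ℝ) * x} = Iio (0:ℝ) := by
        ext x; simp only [mem_setOf_eq, mem_Iio]; constructor <;> intro h <;> nlinarith
      have heq1' : (∫ x in {x : ℝ | 0 < (1:ℝ) * x}, f x) =
          ∫ u : ℝ, ((1 + 1 * (u / r u)) / 2) * f ((u + 1 * r u) / 2) := heq1
      have heq2' : (∫ x in {x : ℝ | 0 < (-1:ℝ) * x}, f x) =
          ∫ u : ℝ, ((1 + (-1) * (u / r u)) / 2) * f ((u + (-1) * r u) / 2) := heq2
      have hint1' : IntegrableOn f {x : ℝ | 0 < (1:ℝ) * x} ↔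
          Integrable (fun u : ℝ => ((1 + 1 * (u / r u)) / 2) * f ((u + 1 * r u) / 2)) := hint1
      have hint2' : IntegrableOn f {x : ℝ | 0 < (-1:ℝ) * x} ↔
          Integrable (fun u : ℝ => ((1 + (-1) * (u / r u)) / 2) * f ((u + (-1) * r u) / 2)) := hint2
      have hfun1 : (fun u : ℝ => ((1 + 1 * (u / r u)) / 2) * f ((u + 1 * r u) / 2)) = F1 := by
        funext u; rw [hcomp 1 (by norm_num) u]
      have hfun2 : (fun u : ℝ => ((1 + (-1) * (u / r u)) / 2) * f ((u + (-1) * r u) / 2)) = F2 := by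
        funext u; rw [hcomp (-1) (by norm_num) u]
      have hIoi_eq : ∫ x in Ioi (0:ℝ), f x = ∫ u : ℝ, F1 u := by
        rw [← hone, heq1', hfun1]
      have hIio_eq : ∫ x in Iio (0:ℝ), f x = ∫ u : ℝ, F2 u := by
        rw [← hneg, heq2', hfun2]
      have hIoiInt : IntegrableOn f (Ioi (0:ℝ)) := by
        rw [← hone]; exact hint1'.mpr (by rw [hfun1]; exact hF1int)
      have hIioInt : IntegrableOn f (Iio (0:ℝ)) := by
        rw [← hneg]; exact hint2'.mpr (by rw [hfun2]; exact hF2int)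
      have hIicInt : IntegrableOn f (Iic (0:ℝ)) := hIioInt.congr_set_ae Iio_ae_eq_Iic.symm
      rw [← intervalIntegral.integral_Iic_add_Ioi hIicInt hIoiInt, integral_Iic_eq_integral_Iio, hIio_eq, hIoi_eq,
        ← integral_add hF2int hF1int]
      rw [show (fun u : ℝ => F2 u + F1 u) = g by
        funext u; rw [hF1, hF2, hg]; ring]
      exact lorentz_int M D hM hD
  rw [key]
  field_simp
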